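/- Let 0 < λ < 1 and n ≥ 1, and let a, b : ℤ → (0,∞) be n-periodic sequences with a_j · b_{j+1} < λ² for all j ∈ ℤ. If there exists at least one forward λ-good index for a and at least one backward λ-good index for b, then there exists an integer that is simultaneously a forward λ-good index for a and a backward λ-good index for b. -/

import Mathlib

/-- `m` is a forward `λ`-good index for `a`. -/
def IsForwardGood (lam : ℝ) (a : ℤ → ℝ) (m : ℤ) : Prop :=
  ∀ k : ℕ, 1 ≤ k → ∏ i ∈ Finset.range k, a (m + i) ≤ lam ^ k

/-- `m` is a backward `λ`-good index for `b`. -/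
def IsBackwardGood (lam : ℝ) (b : ℤ → ℝ) (m : ℤ) : Prop :=
  ∀ k : ℕ, 1 ≤ k → ∏ i ∈ Finset.range k, b (m - i) ≤ lam ^ k

private noncomputable def gsum (f : ℤ → ℝ) (t u : ℤ) : ℝ := ∑ j ∈ Finset.Ico t u, f j

private lemma gsum_self (f : ℤ → ℝ) (t : ℤ) : gsum f t t = 0 := by simp [gsum]

private lemma gsum_add (f : ℤ → ℝ) {t u v : ℤ} (h1 : t ≤ u) (h2 : u ≤ v) :
    gsum f t u + gsum f u v = gsum f t v := by
  rw [gsum, gsum, gsum, ← Finset.Ico_union_Ico_eq_Ico h1 h2,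
    Finset.sum_union (Finset.Ico_disjoint_Ico_consecutive t u v)]

private lemma gsum_single (f : ℤ → ℝ) (t : ℤ) : gsum f t (t + 1) = f t := by
  have h : Finset.Ico t (t + 1) = {t} := by
    ext x; simp [Finset.mem_Ico]; omega
  rw [gsum, h, Finset.sum_singleton]

private lemma gsum_eq_range (f : ℤ → ℝ) (t : ℤ) (k : ℕ) :
    gsum f t (t + k) = ∑ i ∈ Finset.range k, f (t + i) := by
  induction k with
  | zero => simp [gsum]
  | succ k ih =>
    have h : t + (k + 1 : ℕ) = (t + k) + 1 := by push_cast; ring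
    rw [h, ← gsum_add f (by omega : t ≤ t + (k:ℤ)) (by omega : (t + (k:ℤ)) ≤ t + k + 1),
      gsum_single, ih, Finset.sum_range_succ]

private lemma gsum_backward (f : ℤ → ℝ) (t : ℤ) (k : ℕ) :
    gsum f t (t + k) = ∑ i ∈ Finset.range k, f (t + k - 1 - i) := by
  rw [gsum_eq_range, ← Finset.sum_range_reflect (fun i => f (t + k - 1 - (i : ℕ))) k]
  refine Finset.sum_congr rfl fun i hi => ?_
  simp only [Finset.mem_range] at hi
  congr 1
  omega

private lemma prod_le_pow_iff_log (lam : ℝ) (hlam : 0 < lam) (g : ℕ → ℝ)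
    (hg : ∀ i, 0 < g i) (k : ℕ) :
    (∏ i ∈ Finset.range k, g i ≤ lam ^ k) ↔
      (∑ i ∈ Finset.range k, (Real.log (g i) - Real.log lam) ≤ 0) := by
  have hp : 0 < ∏ i ∈ Finset.range k, g i := Finset.prod_pos (fun i _ => hg i)
  rw [← Real.log_le_log_iff hp (pow_pos hlam k),
    Real.log_prod (fun i _ => (hg i).ne'), Real.log_pow,
    Finset.sum_sub_distrib, Finset.sum_const, Finset.card_range, nsmul_eq_mul]
  constructor <;> intro h <;> linarith

private lemma forwardGood_iff (lam : ℝ) (hlam : 0 < lam) (a : ℤ → ℝ)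
    (ha : ∀ j, 0 < a j) (m : ℤ) :
    IsForwardGood lam a m ↔
      ∀ u : ℤ, m ≤ u → gsum (fun j => Real.log (a j) - Real.log lam) m u ≤ 0 := by
  constructor
  · intro h u hu
    obtain ⟨k, rfl⟩ : ∃ k : ℕ, u = m + k := ⟨(u - m).toNat, by omega⟩
    rw [gsum_eq_range]
    rcases Nat.eq_zero_or_pos k with rfl | hkpos
    · simp
    · have h2 := h k hkpos
      rw [prod_le_pow_iff_log lam hlam _ (fun i => ha _)] at h2
      exact h2
  · intro h k hk
    rw [prod_le_pow_iff_log lam hlam _ (fun i => ha _)]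
    have h2 := h (m + k) (by omega)
    rwa [gsum_eq_range] at h2

private lemma backwardGood_iff (lam : ℝ) (hlam : 0 < lam) (b : ℤ → ℝ)
    (hb : ∀ j, 0 < b j) (m : ℤ) :
    IsBackwardGood lam b m ↔
      ∀ t : ℤ, t ≤ m + 1 → gsum (fun j => Real.log (b j) - Real.log lam) t (m + 1) ≤ 0 := by
  have hre : ∀ (t : ℤ) (k : ℕ), t + k = m + 1 →
      gsum (fun j => Real.log (b j) - Real.log lam) t (m + 1)
        = ∑ i ∈ Finset.range k, (Real.log (b (m - i)) - Real.log lam) := by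
    intro t k hk
    rw [← hk, gsum_backward]
    refine Finset.sum_congr rfl fun i hi => ?_
    simp only [Finset.mem_range] at hi
    have he : t + (k : ℤ) - 1 - i = m - i := by omega
    rw [he]
  constructor
  · intro h t ht
    obtain ⟨k, hk⟩ : ∃ k : ℕ, t + k = m + 1 := ⟨(m + 1 - t).toNat, by omega⟩
    rw [hre t k hk]
    rcases Nat.eq_zero_or_pos k with rfl | hkpos
    · simp
    · have h2 := h k hkpos
      rwa [prod_le_pow_iff_log lam hlam _ (fun i => hb _)] at h2
  · intro h k hk
    rw [prod_le_pow_iff_log lam hlam _ (fun i => hb _)]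
    have h2 := h (m + 1 - k) (by omega)
    rwa [hre (m + 1 - k) k (by omega)] at h2

private lemma int_const_of_step (g : ℤ → ℝ) (h : ∀ t, g (t + 1) = g t) (s t : ℤ) :
    g s = g t := by
  have h0 : ∀ t : ℤ, g t = g 0 := by
    intro t
    induction t using Int.induction_on with
    | zero => rfl
    | succ i ih => rw [h i]; exact ih
    | pred i ih =>
      have h2 := h (-(i : ℤ) - 1)
      have he : -(i : ℤ) - 1 + 1 = -(i : ℤ) := by ring
      rw [he] at h2
      rw [← h2]
      exact ih
  rw [h0 s, h0 t]

/-- The intersection argument in the proof of Lemma 4.2: for `n`-periodic positive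
sequences `a`, `b` dominated by `a j * b (j+1) < λ²`, if there is a forward `λ`-good
index for `a` and a backward `λ`-good index for `b`, then some index is both. -/
theorem forward_and_backward_good_indices_meet (lam : ℝ) (hlam0 : 0 < lam)
    (hlam1 : lam < 1) (n : ℕ) (hn : 1 ≤ n) (a b : ℤ → ℝ)
    (ha : ∀ j : ℤ, 0 < a j) (hb : ∀ j : ℤ, 0 < b j)
    (hap : ∀ j : ℤ, a (j + n) = a j) (hbp : ∀ j : ℤ, b (j + n) = b j)
    (hdom : ∀ j : ℤ, a j * b (j + 1) < lam ^ 2)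
    (hfa : ∃ m : ℤ, IsForwardGood lam a m)
    (hbb : ∃ m : ℤ, IsBackwardGood lam b m) :
    ∃ m : ℤ, IsForwardGood lam a m ∧ IsBackwardGood lam b m := by
  obtain ⟨m₀, hm₀⟩ := hfa
  obtain ⟨m₁, hm₁⟩ := hbb
  set c : ℤ → ℝ := fun j => Real.log (a j) - Real.log lam with hc
  set d : ℤ → ℝ := fun j => Real.log (b j) - Real.log lam with hd
  have hcper : ∀ j : ℤ, c (j + n) = c j := by
    intro j; simp only [hc, hap j]
  -- per-period sums of c are ≤ 0 (from the existence of a forward good index)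
  have hCper : ∀ t : ℤ, gsum c t (t + n) ≤ 0 := by
    have hstep : ∀ t : ℤ, gsum c (t + 1) (t + 1 + n) = gsum c t (t + n) := by
      intro t
      have h1 : gsum c t (t + 1) + gsum c (t + 1) (t + n) = gsum c t (t + n) :=
        gsum_add c (by omega) (by omega)
      have h2 : gsum c (t + 1) (t + n) + gsum c (t + n) (t + n + 1)
          = gsum c (t + 1) (t + n + 1) := gsum_add c (by omega) (by omega)
      have h3 := gsum_single c t
      have h4 := gsum_single c (t + n)
      have h5 := hcper t
      have he : t + 1 + (n : ℤ) = t + n + 1 := by ring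
      rw [he]
      linarith
    intro t
    have hconst : gsum c t (t + n) = gsum c m₀ (m₀ + n) :=
      int_const_of_step (fun t => gsum c t (t + n)) hstep t m₀
    rw [hconst]
    exact (forwardGood_iff lam hlam0 a ha m₀).mp hm₀ (m₀ + n) (by omega)
  -- choose m maximizing the partial sums of c over the window [m₁, m₁ + n - 1]
  have hne : (Finset.Icc m₁ (m₁ + n - 1)).Nonempty :=
    ⟨m₁, Finset.mem_Icc.mpr ⟨le_refl _, by omega⟩⟩
  obtain ⟨m, hmmem, hmmax⟩ :=
    Finset.exists_max_image (Finset.Icc m₁ (m₁ + n - 1)) (fun t => gsum c m₁ t) hne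
  simp only [Finset.mem_Icc] at hmmem
  -- the maximum over the window dominates all partial sums to the right
  have key : ∀ k : ℕ, ∀ u : ℤ, m₁ ≤ u → u - m₁ = k → gsum c m₁ u ≤ gsum c m₁ m := by
    intro k
    induction k using Nat.strong_induction_on with
    | _ k ih =>
      intro u hu huk
      by_cases hwin : u ≤ m₁ + n - 1
      · exact hmmax u (Finset.mem_Icc.mpr ⟨hu, hwin⟩)
      · have h1 : m₁ ≤ u - n := by omega
        have h2 : gsum c m₁ (u - n) + gsum c (u - n) u = gsum c m₁ u :=
          gsum_add c h1 (by omega)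
        have h3 : gsum c (u - n) u ≤ 0 := by
          have h4 := hCper (u - n)
          have he : u - n + (n : ℤ) = u := by ring
          rwa [he] at h4
        have h5 : gsum c m₁ (u - n) ≤ gsum c m₁ m :=
          ih (u - n - m₁).toNat (by omega) (u - n) h1 (by omega)
        linarith
  have hkey : ∀ u : ℤ, m₁ ≤ u → gsum c m₁ u ≤ gsum c m₁ m := fun u hu =>
    key (u - m₁).toNat u hu (by omega)
  -- m is forward good for a
  have hmF : IsForwardGood lam a m := by
    rw [forwardGood_iff lam hlam0 a ha m]
    intro u hu
    have h1 : gsum c m₁ m + gsum c m u = gsum c m₁ u := gsum_add c hmmem.1 hu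
    have h2 := hkey u (le_trans hmmem.1 hu)
    linarith
  -- pointwise domination, in log form
  have hdom' : ∀ j : ℤ, c j + d (j + 1) ≤ 0 := by
    intro j
    have h1 : Real.log (a j * b (j + 1)) < Real.log (lam ^ 2) :=
      Real.log_lt_log (mul_pos (ha j) (hb _)) (hdom j)
    rw [Real.log_mul (ha j).ne' (hb _).ne', Real.log_pow] at h1
    simp only [hc, hd]
    push_cast at h1
    linarith
  -- domination for interval sums
  have hDom : ∀ t u : ℤ, t ≤ u → gsum d (t + 1) (u + 1) + gsum c t u ≤ 0 := by
    intro t u htu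
    obtain ⟨k, rfl⟩ : ∃ k : ℕ, u = t + k := ⟨(u - t).toNat, by omega⟩
    have h1 : gsum c t (t + k) = ∑ i ∈ Finset.range k, c (t + i) := gsum_eq_range c t k
    have h2 : gsum d (t + 1) (t + k + 1) = ∑ i ∈ Finset.range k, d (t + i + 1) := by
      have he : t + (k : ℤ) + 1 = (t + 1) + k := by ring
      rw [he, gsum_eq_range]
      refine Finset.sum_congr rfl fun i _ => ?_
      congr 1
      ring
    rw [h1, h2, ← Finset.sum_add_distrib]
    apply Finset.sum_nonpos
    intro i _
    have h3 := hdom' (t + i)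
    linarith
  -- m is backward good for b
  have hmB : IsBackwardGood lam b m := by
    rw [backwardGood_iff lam hlam0 b hb m]
    intro t ht
    by_cases hcase : t ≤ m₁ + 1
    · have h1 : gsum d t (m₁ + 1) + gsum d (m₁ + 1) (m + 1) = gsum d t (m + 1) :=
        gsum_add d hcase (by omega)
      have h2 : gsum d t (m₁ + 1) ≤ 0 :=
        (backwardGood_iff lam hlam0 b hb m₁).mp hm₁ t hcase
      have h3 : gsum d (m₁ + 1) (m + 1) + gsum c m₁ m ≤ 0 := hDom m₁ m hmmem.1
      have h4 : 0 ≤ gsum c m₁ m := by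
        have h5 := hmmax m₁ (Finset.mem_Icc.mpr ⟨le_refl _, by omega⟩)
        simp only [gsum_self] at h5
        exact h5
      linarith
    · have hs2 : t - 1 ≤ m := by omega
      have h3 : gsum d (t - 1 + 1) (m + 1) + gsum c (t - 1) m ≤ 0 := hDom (t - 1) m hs2
      have he : t - 1 + 1 = t := by ring
      rw [he] at h3
      have h4 : 0 ≤ gsum c (t - 1) m := by
        have ha1 : gsum c m₁ (t - 1) + gsum c (t - 1) m = gsum c m₁ m :=
          gsum_add c (by omega) hs2
        have ha2 : gsum c m₁ (t - 1) ≤ gsum c m₁ m :=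
          hmmax (t - 1) (Finset.mem_Icc.mpr ⟨by omega, by omega⟩)
        linarith
      linarith
  exact ⟨m, hmF, hmB⟩
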